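/- arXiv:1302.1603 — 2 statements merged into one kernel-verified Lean document; each statement's English description precedes it below -/
import Mathlib

section
/- Let B ⊂ ℝⁿ be an open ball centered at 0 and let u : B → ℝ be continuous and superharmonic (with respect to the Euclidean Laplacian). Then the minimal radial function v(x) := min_{‖y‖ = ‖x‖} u(y) is superharmonic on B. -/
open MeasureTheory Filter Topology

/-- `u` is superharmonic on `Ω ⊆ ℝⁿ`: lower semicontinuous on `Ω` and, for every closed
ball contained in `Ω`, `u x` is at least the average of `u` over the boundary sphere. -/
def Superharmonic (n : ℕ) (Ω : Set (EuclideanSpace ℝ (Fin n)))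
    (u : EuclideanSpace ℝ (Fin n) → ℝ) : Prop :=
  LowerSemicontinuousOn u Ω ∧
    ∀ x ∈ Ω, ∀ ρ > (0 : ℝ), Metric.closedBall x ρ ⊆ Ω →
      (⨍ y in Metric.sphere x ρ, u y ∂(μH[(n : ℝ) - 1])) ≤ u x

/-- If `u` is continuous and superharmonic on a ball `B` centered at `0` in `ℝⁿ`, then the
minimal radial function `v x = min_{‖y‖ = ‖x‖} u y` is superharmonic on `B`. -/
theorem stmt_5 (n : ℕ) (R : ℝ) (hR : 0 < R)
    (u v : EuclideanSpace ℝ (Fin n) → ℝ)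
    (hu_cont : ContinuousOn u (Metric.ball (0 : EuclideanSpace ℝ (Fin n)) R))
    (hu_sh : Superharmonic n (Metric.ball (0 : EuclideanSpace ℝ (Fin n)) R) u)
    (hv : ∀ x ∈ Metric.ball (0 : EuclideanSpace ℝ (Fin n)) R,
      IsLeast (u '' Metric.sphere (0 : EuclideanSpace ℝ (Fin n)) ‖x‖) (v x)) :
    Superharmonic n (Metric.ball (0 : EuclideanSpace ℝ (Fin n)) R) v := by
  set B := Metric.ball (0 : EuclideanSpace ℝ (Fin n)) R with hB
  -- a uniform one-sided continuity estimate for `v` on closed balls inside `B`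
  have key : ∀ r : ℝ, r < R → ∀ ε > (0 : ℝ), ∃ δ > (0 : ℝ),
      ∀ a b : EuclideanSpace ℝ (Fin n), ‖a‖ ≤ r → ‖b‖ ≤ r → dist a b < δ → v a ≤ v b + ε := by
    intro r hrR ε hε
    have hKB : Metric.closedBall (0 : EuclideanSpace ℝ (Fin n)) r ⊆ B := Metric.closedBall_subset_ball hrR
    have huc : UniformContinuousOn u (Metric.closedBall (0 : EuclideanSpace ℝ (Fin n)) r) :=
      (isCompact_closedBall (0 : EuclideanSpace ℝ (Fin n)) r).uniformContinuousOn_of_continuous (hu_cont.mono hKB)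
    obtain ⟨δ, hδ, hδ'⟩ := Metric.uniformContinuousOn_iff.1 huc ε hε
    refine ⟨δ, hδ, ?_⟩
    intro a b ha hb hab
    have haB : a ∈ B := Metric.mem_ball.2 (by
      rw [dist_zero_right]; exact lt_of_le_of_lt ha hrR)
    have hbB : b ∈ B := Metric.mem_ball.2 (by
      rw [dist_zero_right]; exact lt_of_le_of_lt hb hrR)
    obtain ⟨⟨yb, hyb, hyb_eq⟩, hb_lb⟩ := hv b hbB
    obtain ⟨⟨ya, hya, hya_eq⟩, ha_lb⟩ := hv a haB
    have hyb_norm : ‖yb‖ = ‖b‖ := mem_sphere_zero_iff_norm.1 hyb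
    have hya_norm : ‖ya‖ = ‖a‖ := mem_sphere_zero_iff_norm.1 hya
    have habs : |‖a‖ - ‖b‖| ≤ dist a b := by
      rw [dist_eq_norm]; exact abs_norm_sub_norm_le a b
    by_cases hb0 : ‖b‖ = 0
    · -- `yb = 0`; use the witness for `a`
      have hyb0 : yb = 0 := by
        have : ‖yb‖ = 0 := by rw [hyb_norm, hb0]
        simpa [norm_eq_zero] using this
      have hya_mem : ya ∈ Metric.closedBall (0 : EuclideanSpace ℝ (Fin n)) r := by
        rw [Metric.mem_closedBall, dist_zero_right, hya_norm]; exact ha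
      have hyb_mem : yb ∈ Metric.closedBall (0 : EuclideanSpace ℝ (Fin n)) r := by
        rw [Metric.mem_closedBall, dist_zero_right, hyb_norm]; exact hb
      have hdy : dist ya yb < δ := by
        rw [hyb0, dist_zero_right, hya_norm]
        calc ‖a‖ = |‖a‖ - ‖b‖| := by rw [hb0]; simp [abs_of_nonneg (norm_nonneg a)]
          _ ≤ dist a b := habs
          _ < δ := hab
      have := hδ' ya hya_mem yb hyb_mem hdy
      rw [Real.dist_eq] at this
      have h1 : u ya - u yb < ε := lt_of_le_of_lt (le_abs_self _) this
      rw [← hya_eq, ← hyb_eq]; linarith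
    · -- rescale `yb` to the sphere of radius `‖a‖`
      have hb0' : (0 : ℝ) < ‖b‖ := lt_of_le_of_ne (norm_nonneg b) (Ne.symm hb0)
      set y' : EuclideanSpace ℝ (Fin n) := (‖a‖ / ‖b‖) • yb with hy'def
      have hy'_norm : ‖y'‖ = ‖a‖ := by
        rw [hy'def, norm_smul, hyb_norm, Real.norm_eq_abs,
          abs_of_nonneg (div_nonneg (norm_nonneg a) (norm_nonneg b)),
          div_mul_cancel₀ _ (ne_of_gt hb0')]
      have hdy : dist y' yb < δ := by
        have : y' - yb = ((‖a‖ - ‖b‖) / ‖b‖) • yb := by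
          rw [hy'def]
          have hc : (‖a‖ / ‖b‖ : ℝ) - 1 = (‖a‖ - ‖b‖) / ‖b‖ := by field_simp
          rw [← hc, sub_smul, one_smul]
        rw [dist_eq_norm, this, norm_smul, hyb_norm, Real.norm_eq_abs, abs_div,
          abs_of_pos hb0', div_mul_cancel₀ _ (ne_of_gt hb0')]
        exact lt_of_le_of_lt habs hab
      have hy'_mem : y' ∈ Metric.closedBall (0 : EuclideanSpace ℝ (Fin n)) r := by
        rw [Metric.mem_closedBall, dist_zero_right, hy'_norm]; exact ha
      have hyb_mem : yb ∈ Metric.closedBall (0 : EuclideanSpace ℝ (Fin n)) r := by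
        rw [Metric.mem_closedBall, dist_zero_right, hyb_norm]; exact hb
      have := hδ' y' hy'_mem yb hyb_mem hdy
      rw [Real.dist_eq] at this
      have h1 : u y' - u yb < ε := lt_of_le_of_lt (le_abs_self _) this
      have h2 : v a ≤ u y' := ha_lb ⟨y', mem_sphere_zero_iff_norm.2 hy'_norm, rfl⟩
      rw [← hyb_eq]; linarith
  -- continuity of `v` on `B`
  have hv_cont : ContinuousOn v B := by
    intro x hx
    rw [Metric.continuousWithinAt_iff]
    intro ε hε
    have hxR : ‖x‖ < R := by simpa [dist_zero_right] using Metric.mem_ball.1 hx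
    set r : ℝ := (‖x‖ + R) / 2 with hrdef
    have hxr : ‖x‖ < r := by rw [hrdef]; linarith
    have hrR : r < R := by rw [hrdef]; linarith
    obtain ⟨δ, hδ, hδ'⟩ := key r hrR (ε / 2) (half_pos hε)
    refine ⟨min δ (r - ‖x‖), lt_min hδ (by linarith), ?_⟩
    intro z hz hzd
    have hzx : dist z x < δ := lt_of_lt_of_le hzd (min_le_left _ _)
    have hzr : ‖z‖ ≤ r := by
      have : dist z x < r - ‖x‖ := lt_of_lt_of_le hzd (min_le_right _ _)
      have h2 : ‖z‖ - ‖x‖ ≤ dist z x := by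
        rw [dist_eq_norm]; exact norm_sub_norm_le z x
      linarith
    have h1 : v z ≤ v x + ε / 2 := hδ' z x hzr (le_of_lt hxr) hzx
    have h2 : v x ≤ v z + ε / 2 := hδ' x z (le_of_lt hxr) hzr (by rwa [dist_comm])
    rw [Real.dist_eq, abs_sub_lt_iff]
    constructor <;> linarith
  refine ⟨hv_cont.lowerSemicontinuousOn, ?_⟩
  -- the mean value inequality
  intro x hx ρ hρ hball
  obtain ⟨⟨y₀, hy₀s, hy₀_eq⟩, hy₀_lb⟩ := hv x hx
  have hy₀_norm : ‖y₀‖ = ‖x‖ := mem_sphere_zero_iff_norm.1 hy₀s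
  have hxR : ‖x‖ < R := by simpa [dist_zero_right] using Metric.mem_ball.1 hx
  have hy₀B : y₀ ∈ B := Metric.mem_ball.2 (by rw [dist_zero_right, hy₀_norm]; exact hxR)
  -- the closed ball around `y₀` is also contained in `B`
  have hball' : Metric.closedBall y₀ ρ ⊆ B := by
    by_cases hx0 : x = 0
    · have : y₀ = 0 := by
        have : ‖y₀‖ = 0 := by rw [hy₀_norm, hx0, norm_zero]
        simpa [norm_eq_zero] using this
      rw [this, ← hx0]; exact hball
    · have hxpos : (0 : ℝ) < ‖x‖ := norm_pos_iff.2 hx0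
      have hsum : ‖x‖ + ρ < R := by
        set p : EuclideanSpace ℝ (Fin n) := (1 + ρ / ‖x‖) • x with hpdef
        have hp_mem : p ∈ Metric.closedBall x ρ := by
          rw [Metric.mem_closedBall, dist_eq_norm, hpdef]
          have : (1 + ρ / ‖x‖) • x - x = (ρ / ‖x‖) • x := by
            rw [add_smul, one_smul, add_sub_cancel_left]
          rw [this, norm_smul, Real.norm_eq_abs,
            abs_of_nonneg (div_nonneg (le_of_lt hρ) (norm_nonneg x)),
            div_mul_cancel₀ _ (ne_of_gt hxpos)]
        have hpB : p ∈ B := hball hp_mem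
        have hpn : ‖p‖ = ‖x‖ + ρ := by
          rw [hpdef, norm_smul, Real.norm_eq_abs,
            abs_of_nonneg (by positivity : (0:ℝ) ≤ 1 + ρ / ‖x‖)]
          field_simp
        have := Metric.mem_ball.1 hpB
        rw [dist_zero_right, hpn] at this
        exact this
      intro w hw
      rw [Metric.mem_closedBall, dist_eq_norm] at hw
      refine Metric.mem_ball.2 ?_
      rw [dist_zero_right]
      calc ‖w‖ = ‖w - y₀ + y₀‖ := by rw [sub_add_cancel]
        _ ≤ ‖w - y₀‖ + ‖y₀‖ := norm_add_le _ _
        _ ≤ ρ + ‖x‖ := by rw [hy₀_norm]; linarith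
        _ < R := by linarith
  -- the reflection mapping `x` to `y₀`
  set e : EuclideanSpace ℝ (Fin n) ≃ₗᵢ[ℝ] EuclideanSpace ℝ (Fin n) := Submodule.reflection (ℝ ∙ (x - y₀))ᗮ with hedef
  have hex : e x = y₀ := Submodule.reflection_sub hy₀_norm.symm
  have hmp : MeasurePreserving (⇑e)
      (μH[(n : ℝ) - 1] : Measure (EuclideanSpace ℝ (Fin n))) μH[(n : ℝ) - 1] := by
    exact e.toIsometryEquiv.measurePreserving_hausdorffMeasure ((n : ℝ) - 1)
  have hemb : MeasurableEmbedding (⇑e) :=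
    e.toIsometryEquiv.toHomeomorph.measurableEmbedding
  have hpre : (⇑e) ⁻¹' Metric.sphere y₀ ρ = Metric.sphere x ρ := by
    ext z
    simp only [Set.mem_preimage, Metric.mem_sphere]
    rw [← hex, dist_eq_norm, dist_eq_norm, ← map_sub e, e.norm_map]
  have hmeas_eq : μH[(n : ℝ) - 1] (Metric.sphere x ρ) = μH[(n : ℝ) - 1] (Metric.sphere y₀ ρ) := by
    rw [← hpre]
    exact hmp.measure_preimage Metric.isClosed_sphere.measurableSet.nullMeasurableSet
  have hint_eq : ∫ z in Metric.sphere x ρ, u (e z) ∂(μH[(n : ℝ) - 1]) =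
      ∫ w in Metric.sphere y₀ ρ, u w ∂(μH[(n : ℝ) - 1]) := by
    rw [← hpre]
    exact hmp.setIntegral_preimage_emb hemb u _
  have husph : (⨍ w in Metric.sphere y₀ ρ, u w ∂(μH[(n : ℝ) - 1])) ≤ u y₀ :=
    hu_sh.2 y₀ hy₀B ρ hρ hball'
  have hsubB : Metric.sphere x ρ ⊆ B :=
    fun z hz => hball (Metric.sphere_subset_closedBall hz)
  have hsubB' : Metric.sphere y₀ ρ ⊆ B :=
    fun z hz => hball' (Metric.sphere_subset_closedBall hz)
  -- pointwise bound `v z ≤ u (e z)` on the sphere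
  have hpt : ∀ z ∈ Metric.sphere x ρ, v z ≤ u (e z) := by
    intro z hz
    exact (hv z (hsubB hz)).2 ⟨e z, mem_sphere_zero_iff_norm.2 (e.norm_map z), rfl⟩
  by_cases hzero : μH[(n : ℝ) - 1] (Metric.sphere x ρ) = 0
  · have hA : (⨍ z in Metric.sphere x ρ, v z ∂(μH[(n : ℝ) - 1])) = 0 := by
      rw [setAverage_eq, setIntegral_measure_zero _ hzero, smul_zero]
    have hB0 : (⨍ w in Metric.sphere y₀ ρ, u w ∂(μH[(n : ℝ) - 1])) = 0 := by
      have hz' : μH[(n : ℝ) - 1] (Metric.sphere y₀ ρ) = 0 := by rw [← hmeas_eq]; exact hzero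
      rw [setAverage_eq, setIntegral_measure_zero _ hz', smul_zero]
    rw [hA, ← hy₀_eq]
    rw [hB0] at husph
    exact husph
  by_cases htop : μH[(n : ℝ) - 1] (Metric.sphere x ρ) = ⊤
  · have hA : (⨍ z in Metric.sphere x ρ, v z ∂(μH[(n : ℝ) - 1])) = 0 := by
      rw [setAverage_eq, measureReal_def, htop, ENNReal.toReal_top, inv_zero, zero_smul]
    have hB0 : (⨍ w in Metric.sphere y₀ ρ, u w ∂(μH[(n : ℝ) - 1])) = 0 := by
      rw [setAverage_eq, measureReal_def, ← hmeas_eq, htop, ENNReal.toReal_top, inv_zero, zero_smul]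
    rw [hA, ← hy₀_eq]
    rw [hB0] at husph
    exact husph
  -- main case: the sphere has finite positive measure
  have hms : MeasurableSet (Metric.sphere x ρ) := Metric.isClosed_sphere.measurableSet
  have hcpt : IsCompact (Metric.sphere x ρ) := isCompact_sphere x ρ
  -- integrability of `v`
  have hvc : ContinuousOn v (Metric.sphere x ρ) := hv_cont.mono hsubB
  obtain ⟨Cv, hCv⟩ := hcpt.exists_bound_of_continuousOn hvc
  have hvi : IntegrableOn v (Metric.sphere x ρ) (μH[(n : ℝ) - 1]) :=
    ⟨hvc.aestronglyMeasurable hms,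
      HasFiniteIntegral.restrict_of_bounded (C := Cv) (lt_top_iff_ne_top.2 htop)
        (ae_restrict_of_forall_mem hms hCv)⟩
  -- integrability of `u ∘ e`
  have huec : ContinuousOn (fun z => u (e z)) (Metric.sphere x ρ) := by
    refine ContinuousOn.comp hu_cont e.continuous.continuousOn ?_
    intro z hz
    rw [← hpre] at hz
    exact hsubB' hz
  obtain ⟨Cu, hCu⟩ := hcpt.exists_bound_of_continuousOn huec
  have hui : IntegrableOn (fun z => u (e z)) (Metric.sphere x ρ) (μH[(n : ℝ) - 1]) :=
    ⟨huec.aestronglyMeasurable hms,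
      HasFiniteIntegral.restrict_of_bounded (C := Cu) (lt_top_iff_ne_top.2 htop)
        (ae_restrict_of_forall_mem hms hCu)⟩
  have hmono : ∫ z in Metric.sphere x ρ, v z ∂(μH[(n : ℝ) - 1]) ≤
      ∫ z in Metric.sphere x ρ, u (e z) ∂(μH[(n : ℝ) - 1]) :=
    setIntegral_mono_on hvi hui hms hpt
  calc (⨍ z in Metric.sphere x ρ, v z ∂(μH[(n : ℝ) - 1]))
      = (μH[(n : ℝ) - 1] (Metric.sphere x ρ)).toReal⁻¹ •
        ∫ z in Metric.sphere x ρ, v z ∂(μH[(n : ℝ) - 1]) := by rw [setAverage_eq, measureReal_def]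
    _ ≤ (μH[(n : ℝ) - 1] (Metric.sphere x ρ)).toReal⁻¹ •
        ∫ z in Metric.sphere x ρ, u (e z) ∂(μH[(n : ℝ) - 1]) := by
        apply smul_le_smul_of_nonneg_left hmono
        positivity
    _ = (⨍ w in Metric.sphere y₀ ρ, u w ∂(μH[(n : ℝ) - 1])) := by
        rw [setAverage_eq, measureReal_def, hint_eq, hmeas_eq]
    _ ≤ u y₀ := husph
    _ = v x := hy₀_eq
end

section
/- Let n ≥ 3 and let h : ℝⁿ \ {0} → ℝ be continuous. Suppose that for every 0 < r < 1 the rescaled functions h⁽ʳ⁾(x) := h(rx) are uniformly bounded and equicontinuous on the closed annulus {1 ≤ ‖x‖ ≤ 2}, and that lim_{r→0⁺} r^{-n} ∫_{r<‖x‖<2r} |h(x)| dx = 0. Then h(x) → 0 as x → 0. -/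
open MeasureTheory Filter Topology Metric Pointwise

set_option maxHeartbeats 1000000 in
/-- If the rescalings `x ↦ h (r x)` of a continuous `h : ℝⁿ \ {0} → ℝ` (`n ≥ 3`) are
uniformly bounded and equicontinuous on the annulus `{1 ≤ ‖x‖ ≤ 2}` for `0 < r < 1`, and
`r⁻ⁿ ∫_{r<‖x‖<2r} |h| dx → 0` as `r → 0⁺`, then `h x → 0` as `x → 0`. -/
theorem stmt_7 (n : ℕ) (hn : 3 ≤ n) (h : EuclideanSpace ℝ (Fin n) → ℝ)
    (hcont : ContinuousOn h {x | x ≠ 0})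
    (hbdd : ∃ M : ℝ, ∀ r ∈ Set.Ioo (0 : ℝ) 1, ∀ x : EuclideanSpace ℝ (Fin n),
      1 ≤ ‖x‖ → ‖x‖ ≤ 2 → |h (r • x)| ≤ M)
    (hequi : ∀ ε > (0 : ℝ), ∃ δ > (0 : ℝ), ∀ r ∈ Set.Ioo (0 : ℝ) 1,
      ∀ x y : EuclideanSpace ℝ (Fin n), 1 ≤ ‖x‖ → ‖x‖ ≤ 2 → 1 ≤ ‖y‖ → ‖y‖ ≤ 2 →
        ‖x - y‖ < δ → |h (r • x) - h (r • y)| < ε)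
    (hint : Tendsto (fun r : ℝ =>
        (∫ x in {x : EuclideanSpace ℝ (Fin n) | r < ‖x‖ ∧ ‖x‖ < 2 * r}, |h x|) / r ^ n)
      (𝓝[>] (0 : ℝ)) (𝓝 0)) :
    Tendsto h (𝓝[≠] (0 : EuclideanSpace ℝ (Fin n))) (𝓝 0) := by
  obtain ⟨M, hM⟩ := hbdd
  rw [Metric.tendsto_nhdsWithin_nhds]
  intro ε hε
  obtain ⟨δ₀, hδ₀, hEQ⟩ := hequi (ε / 2) (by linarith)
  set ρ : ℝ := min (δ₀ / 2) (1 / 4) with hρdef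
  have hρ : 0 < ρ := lt_min (by linarith) (by norm_num)
  have hρ4 : ρ ≤ 1 / 4 := min_le_right _ _
  have hρδ : ρ ≤ δ₀ / 2 := min_le_left _ _
  set c : ℝ := (volume (ball (0 : EuclideanSpace ℝ (Fin n)) (ρ / 2))).toReal with hc
  have hcpos : 0 < c :=
    ENNReal.toReal_pos (measure_ball_pos _ _ (by linarith)).ne' measure_ball_lt_top.ne
  have hev : ∀ᶠ r in 𝓝[>] (0 : ℝ),
      (∫ x in {x : EuclideanSpace ℝ (Fin n) | r < ‖x‖ ∧ ‖x‖ < 2 * r}, |h x|) / r ^ n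
        < ε / 2 * c :=
    hint.eventually_lt_const (by positivity)
  obtain ⟨δ₁, hδ₁, hδ₁'⟩ := Metric.mem_nhdsWithin_iff.1 hev
  refine ⟨min δ₁ (1 / 2), lt_min hδ₁ (by norm_num), ?_⟩
  intro x hx hxd
  rw [dist_zero_right] at hxd
  rw [Real.dist_eq, sub_zero]
  by_contra hcon
  push_neg at hcon
  set r : ℝ := ‖x‖ with hrdef
  have hr : 0 < r := norm_pos_iff.2 hx
  have hr1 : r < 1 := lt_of_lt_of_le (lt_of_lt_of_le hxd (min_le_right _ _)) (by norm_num)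
  have hrδ₁ : r < δ₁ := lt_of_lt_of_le hxd (min_le_left _ _)
  set x₀ : EuclideanSpace ℝ (Fin n) := r⁻¹ • x with hx₀def
  have hx₀ : ‖x₀‖ = 1 := by
    rw [hx₀def, norm_smul, Real.norm_eq_abs, abs_of_pos (inv_pos.2 hr), ← hrdef,
      inv_mul_cancel₀ hr.ne']
  have hrx₀ : r • x₀ = x := smul_inv_smul₀ hr.ne' x
  set z : EuclideanSpace ℝ (Fin n) := (1 + ρ) • x₀ with hzdef
  have hzn : ‖z‖ = 1 + ρ := by
    rw [hzdef, norm_smul, hx₀, mul_one, Real.norm_eq_abs, abs_of_pos (by linarith)]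
  set B : Set (EuclideanSpace ℝ (Fin n)) := ball z (ρ / 2) with hBdef
  have hBsub : ∀ y ∈ B, 1 < ‖y‖ ∧ ‖y‖ < 2 ∧ ‖y - x₀‖ < δ₀ := by
    intro y hy
    have h1 : ‖y - z‖ < ρ / 2 := mem_ball_iff_norm.1 hy
    have h2 : |‖y‖ - ‖z‖| ≤ ‖y - z‖ := abs_norm_sub_norm_le y z
    rw [hzn] at h2
    have h2' : |‖y‖ - (1 + ρ)| ≤ ‖y - z‖ := h2
    have hzx₀ : z - x₀ = ρ • x₀ := by rw [hzdef, add_smul, one_smul, add_sub_cancel_left]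
    have hzx₀n : ‖z - x₀‖ = ρ := by
      rw [hzx₀, norm_smul, hx₀, mul_one, Real.norm_eq_abs, abs_of_pos hρ]
    have h3 : ‖y - x₀‖ ≤ ‖y - z‖ + ‖z - x₀‖ := norm_sub_le_norm_sub_add_norm_sub y z x₀
    rw [hzx₀n] at h3
    have habs := abs_le.1 h2'
    refine ⟨by linarith [habs.1], by linarith [habs.2], by linarith⟩
  set S : Set (EuclideanSpace ℝ (Fin n)) := {w | r < ‖w‖ ∧ ‖w‖ < 2 * r} with hSdef
  have hSopen : IsOpen S :=
    (isOpen_lt continuous_const continuous_norm).inter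
      (isOpen_lt continuous_norm continuous_const)
  have hSsub0 : S ⊆ {w | w ≠ 0} := fun w hw h0 => by
    have h1 : r < ‖w‖ := hw.1
    rw [h0, norm_zero] at h1
    linarith
  have hSfin : volume S < ⊤ := by
    refine lt_of_le_of_lt (measure_mono (fun w hw => ?_)) (measure_ball_lt_top (x := (0 : EuclideanSpace ℝ (Fin n))) (r := 2 * r))
    exact mem_ball_zero_iff.2 hw.2
  have hMb : ∀ w ∈ S, |h w| ≤ M := by
    intro w hw
    have hn1 : ‖r⁻¹ • w‖ = ‖w‖ / r := by
      rw [norm_smul, Real.norm_eq_abs, abs_of_pos (inv_pos.2 hr), inv_mul_eq_div]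
    have h1 : 1 ≤ ‖r⁻¹ • w‖ := by rw [hn1]; rw [le_div_iff₀ hr]; linarith [hw.1]
    have h2 : ‖r⁻¹ • w‖ ≤ 2 := by rw [hn1]; rw [div_le_iff₀ hr]; linarith [hw.2]
    have := hM r ⟨hr, hr1⟩ (r⁻¹ • w) h1 h2
    rwa [smul_inv_smul₀ hr.ne'] at this
  have hInt : IntegrableOn (fun w => |h w|) S volume := by
    refine ⟨((hcont.mono hSsub0).abs).aestronglyMeasurable hSopen.measurableSet, ?_⟩
    refine HasFiniteIntegral.restrict_of_bounded (C := M) hSfin ?_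
    refine (ae_restrict_iff' hSopen.measurableSet).2 (ae_of_all _ fun w hw => ?_)
    rw [Real.norm_eq_abs, abs_abs]
    exact hMb w hw
  have hrBS : r • B ⊆ S := by
    rintro w ⟨y, hy, rfl⟩
    have hby := hBsub y hy
    have : ‖r • y‖ = r * ‖y‖ := by
      rw [norm_smul, Real.norm_eq_abs, abs_of_pos hr]
    constructor
    · rw [this]; nlinarith [hby.1]
    · rw [this]; nlinarith [hby.2.1]
  have hlow : ∀ w ∈ r • B, ε / 2 ≤ |h w| := by
    rintro w ⟨y, hy, rfl⟩
    obtain ⟨hy1, hy2, hy3⟩ := hBsub y hy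
    have := hEQ r ⟨hr, hr1⟩ y x₀ hy1.le hy2.le hx₀.ge (by rw [hx₀]; norm_num) hy3
    rw [hrx₀] at this
    have habs : |h x| - |h (r • y)| ≤ |h (r • y) - h x| := by
      rw [abs_sub_comm]; exact abs_sub_abs_le_abs_sub _ _
    linarith
  have hmeasrB : MeasurableSet (r • B) := by
    rw [hBdef, _root_.smul_ball hr.ne']
    exact measurableSet_ball
  have hIntrB : IntegrableOn (fun w => |h w|) (r • B) volume := hInt.mono_set hrBS
  have h1 : ε / 2 * (volume (r • B)).toReal ≤ ∫ w in r • B, |h w| := by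
    have hconst : IntegrableOn (fun _ : EuclideanSpace ℝ (Fin n) => ε / 2) (r • B) volume := by
      refine integrableOn_const ?_
      exact (lt_of_le_of_lt (measure_mono hrBS) hSfin).ne
    have := setIntegral_mono_on hconst hIntrB hmeasrB hlow
    rwa [setIntegral_const, smul_eq_mul, mul_comm] at this
  have h2 : (∫ w in r • B, |h w|) ≤ ∫ w in S, |h w| :=
    setIntegral_mono_set hInt (ae_of_all _ fun w => abs_nonneg _)
      (HasSubset.Subset.eventuallyLE hrBS)
  have hvol : (volume (r • B)).toReal = r ^ n * c := by
    rw [hBdef, Measure.addHaar_smul, finrank_euclideanSpace_fin,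
      abs_of_pos (pow_pos hr n), ENNReal.toReal_mul,
      ENNReal.toReal_ofReal (pow_pos hr n).le, hc, Measure.addHaar_ball_center]
  have hbound := hδ₁' ⟨by rw [mem_ball, Real.dist_eq, sub_zero, abs_of_pos hr]; exact hrδ₁, hr⟩
  have hdiv : (∫ w in S, |h w|) < ε / 2 * c * r ^ n := by
    have := (div_lt_iff₀ (pow_pos hr n)).1 hbound
    exact this
  rw [hvol] at h1
  nlinarith
end
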